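/- arXiv:0706.4138 — 3 statements merged into one kernel-verified Lean document; each statement's English description precedes it below -/
import Mathlib

section
/- Let A and B be real m×n matrices. If the row space of A is orthogonal to the row space of B and the column space of A is orthogonal to the column space of B, then ‖A + B‖_* = ‖A‖_* + ‖B‖_*. -/
open Matrix
set_option maxHeartbeats 2000000


/-- The nuclear norm (sum of singular values) of a real matrix, as the trace of √(XᵀX). -/
noncomputable def nucNorm {m n : Type*} [Fintype m] [Fintype n] [DecidableEq n]
    (X : Matrix m n ℝ) : ℝ :=
  ((Matrix.posSemidef_conjTranspose_mul_self X).1.eigenvectorUnitary.1 *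
    diagonal ((RCLike.ofReal : ℝ → ℝ) ∘ (√·) ∘ (Matrix.posSemidef_conjTranspose_mul_self X).1.eigenvalues) *
    (star (Matrix.posSemidef_conjTranspose_mul_self X).1.eigenvectorUnitary : Matrix n n ℝ)).trace

open scoped MatrixOrder in
theorem nucNorm_eq_trace_sqrt {m n : Type*} [Fintype m] [Fintype n] [DecidableEq n]
    (X : Matrix m n ℝ) : nucNorm X = (CFC.sqrt (Xᴴ * X)).trace := by
  have hX := Matrix.posSemidef_conjTranspose_mul_self X
  rw [CFC.sqrt_eq_real_sqrt _ hX.nonneg, cfcₙ_eq_cfc, hX.1.cfc_eq, IsHermitian.cfc, Unitary.conjStarAlgAut_apply]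
  rfl

open scoped MatrixOrder

/-- If the row space of `A` (the span of its rows) is orthogonal to the row space of `B`,
and the column space of `A` (the span of its columns, i.e. the rows of `Aᵀ`) is orthogonal
to the column space of `B`, then the nuclear norm is additive. -/
theorem nucNorm_add_of_orthogonal_spaces (m n : ℕ) (A B : Matrix (Fin m) (Fin n) ℝ)
    (hrow : ∀ u ∈ Submodule.span ℝ (Set.range fun i => A i),
            ∀ v ∈ Submodule.span ℝ (Set.range fun i => B i), u ⬝ᵥ v = 0)
    (hcol : ∀ u ∈ Submodule.span ℝ (Set.range fun j => Aᵀ j),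
            ∀ v ∈ Submodule.span ℝ (Set.range fun j => Bᵀ j), u ⬝ᵥ v = 0) :
    nucNorm (A + B) = nucNorm A + nucNorm B := by
  classical
  -- orthogonality of row spaces gives A * Bᴴ = 0
  have hAB : A * Bᴴ = 0 := by
    rw [conjTranspose_eq_transpose_of_trivial]
    ext i j
    simp only [Matrix.mul_apply, transpose_apply, Matrix.zero_apply]
    exact hrow (A i) (Submodule.subset_span ⟨i, rfl⟩)
      (B j) (Submodule.subset_span ⟨j, rfl⟩)
  -- orthogonality of column spaces gives Aᴴ * B = 0
  have hAtB : Aᴴ * B = 0 := by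
    rw [conjTranspose_eq_transpose_of_trivial]
    ext i j
    simp only [Matrix.mul_apply, transpose_apply, Matrix.zero_apply]
    exact hcol (Aᵀ i) (Submodule.subset_span ⟨i, rfl⟩)
      (Bᵀ j) (Submodule.subset_span ⟨j, rfl⟩)
  have hA := Matrix.posSemidef_conjTranspose_mul_self A
  have hB := Matrix.posSemidef_conjTranspose_mul_self B
  set S := CFC.sqrt (Aᴴ * A) with hS
  set T := CFC.sqrt (Bᴴ * B) with hT
  have hSsymm : Sᴴ = S := (CFC.sqrt_nonneg (Aᴴ * A)).posSemidef.isHermitian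
  have hTsymm : Tᴴ = T := (CFC.sqrt_nonneg (Bᴴ * B)).posSemidef.isHermitian
  -- (AᴴA)(BᴴB) = 0
  have hprod : (Aᴴ * A) * (Bᴴ * B) = 0 := by
    calc (Aᴴ * A) * (Bᴴ * B) = Aᴴ * (A * Bᴴ) * B := by
          simp only [Matrix.mul_assoc]
      _ = 0 := by rw [hAB, Matrix.mul_zero, Matrix.zero_mul]
  -- S * T = 0
  have hST : S * T = 0 := by
    have h1 : (Sᴴ * S) * (T * T) = 0 := by
      rw [hSsymm, CFC.sqrt_mul_sqrt_self _ hA.nonneg, CFC.sqrt_mul_sqrt_self _ hB.nonneg, hprod]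
    rw [conjTranspose_mul_self_mul_eq_zero] at h1
    have h2 : S * (Tᴴ * T) = 0 := by rw [hTsymm]; exact h1
    rw [mul_conjTranspose_mul_self_eq_zero] at h2
    rwa [hTsymm] at h2
  have hTS : T * S = 0 := by
    have := congrArg conjTranspose hST
    rwa [conjTranspose_mul, hSsymm, hTsymm, conjTranspose_zero] at this
  -- (S + T)^2 = (A+B)ᴴ(A+B)
  have hBtA : Bᴴ * A = 0 := by
    have := congrArg conjTranspose hAtB
    rwa [conjTranspose_mul, conjTranspose_conjTranspose, conjTranspose_zero] at this
  have hsq : (S + T) ^ 2 = (A + B)ᴴ * (A + B) := by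
    rw [sq, Matrix.add_mul, Matrix.mul_add, Matrix.mul_add, hST, hTS,
      CFC.sqrt_mul_sqrt_self _ hA.nonneg, CFC.sqrt_mul_sqrt_self _ hB.nonneg, conjTranspose_add, Matrix.add_mul,
      Matrix.mul_add, Matrix.mul_add, hAtB]
    rw [hBtA]
  have hSTpos : ((S + T) : Matrix (Fin n) (Fin n) ℝ).PosSemidef :=
    (CFC.sqrt_nonneg (Aᴴ * A)).posSemidef.add (CFC.sqrt_nonneg (Bᴴ * B)).posSemidef
  have key : S + T = CFC.sqrt ((A + B)ᴴ * (A + B)) :=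
    (CFC.sqrt_unique (by rw [← sq]; exact hsq) hSTpos.nonneg).symm
  simp only [nucNorm_eq_trace_sqrt, ← key, trace_add]
  rfl
end

section
/- Let 𝒜 : ℝ^{m×n} → ℝ^p be a linear map, let r ≥ 1 be an integer, and let X₀ ∈ ℝ^{m×n} with rank(X₀) ≤ r and b = 𝒜(X₀). Suppose there is a constant δ with 0 ≤ δ < 1/10 such that (1−δ)‖X‖_F ≤ ‖𝒜(X)‖ ≤ (1+δ)‖X‖_F for all matrices X ∈ ℝ^{m×n} of rank at most 5r. Then X₀ is the unique minimizer of the nuclear norm ‖X‖_* over all X ∈ ℝ^{m×n} satisfying 𝒜(X) = b; that is, any X with 𝒜(X) = b and ‖X‖_* ≤ ‖X₀‖_* must equal X₀. -/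
open Matrix

/-- The Frobenius norm of a real matrix. -/
noncomputable def frobNorm {m n : Type*} [Fintype m] [Fintype n] (X : Matrix m n ℝ) : ℝ :=
  Real.sqrt (∑ i, ∑ j, X i j ^ 2)

open Finset
namespace RFP

variable {m n : ℕ}

/-- Frobenius inner product. -/
def finner {m n : Type*} [Fintype m] [Fintype n] (A B : Matrix m n ℝ) : ℝ :=
  ∑ i, ∑ j, A i j * B i j

lemma finner_comm {m n : Type*} [Fintype m] [Fintype n] (A B : Matrix m n ℝ) :
    finner A B = finner B A := by
  unfold finner; congr 1; ext i; congr 1; ext j; ring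

lemma frobNorm_eq_sqrt_finner {m n : Type*} [Fintype m] [Fintype n] (A : Matrix m n ℝ) :
    frobNorm A = Real.sqrt (finner A A) := by
  unfold frobNorm finner; congr 1; congr 1; ext i; congr 1; ext j; ring

lemma finner_self_nonneg {m n : Type*} [Fintype m] [Fintype n] (A : Matrix m n ℝ) :
    0 ≤ finner A A :=
  Finset.sum_nonneg fun i _ => Finset.sum_nonneg fun j _ => mul_self_nonneg _

lemma frobNorm_nonneg {m n : Type*} [Fintype m] [Fintype n] (A : Matrix m n ℝ) :
    0 ≤ frobNorm A := Real.sqrt_nonneg _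

lemma frobNorm_sq {m n : Type*} [Fintype m] [Fintype n] (A : Matrix m n ℝ) :
    frobNorm A ^ 2 = finner A A := by
  rw [frobNorm_eq_sqrt_finner, Real.sq_sqrt (finner_self_nonneg A)]

lemma eq_zero_of_finner_self_eq_zero {m n : Type*} [Fintype m] [Fintype n]
    {A : Matrix m n ℝ} (h : finner A A = 0) : A = 0 := by
  ext i j
  have h1 : ∀ i ∈ Finset.univ, (0:ℝ) ≤ ∑ j, A i j * A i j :=
    fun i _ => Finset.sum_nonneg fun j _ => mul_self_nonneg _
  have h2 := (Finset.sum_eq_zero_iff_of_nonneg h1).1 h i (Finset.mem_univ i)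
  have h3 := (Finset.sum_eq_zero_iff_of_nonneg
    (fun j _ => mul_self_nonneg (A i j))).1 h2 j (Finset.mem_univ j)
  simpa [mul_self_eq_zero] using h3

lemma vecMulVec_conjTranspose (a : Fin m → ℝ) (b : Fin n → ℝ) :
    (vecMulVec a b)ᴴ = vecMulVec b a := by
  ext i j; simp [vecMulVec_apply, conjTranspose_apply, mul_comm]

lemma vecMulVec_mul_vecMulVec {p : ℕ} (a : Fin m → ℝ) (b : Fin n → ℝ)
    (c : Fin n → ℝ) (d : Fin p → ℝ) :
    vecMulVec a b * vecMulVec c d = (b ⬝ᵥ c) • vecMulVec a d := by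
  ext i j
  simp only [mul_apply, vecMulVec_apply, Matrix.smul_apply, smul_eq_mul, dotProduct]
  rw [Finset.sum_mul]
  congr 1; ext k; ring

lemma vecMulVec_mulVec (a : Fin m → ℝ) (b : Fin n → ℝ) (x : Fin n → ℝ) :
    vecMulVec a b *ᵥ x = (b ⬝ᵥ x) • a := by
  ext i
  simp only [mulVec, dotProduct, vecMulVec_apply, Pi.smul_apply, smul_eq_mul]
  rw [Finset.sum_mul]; congr 1; ext k; ring

lemma trace_vecMulVec (a b : Fin n → ℝ) : (vecMulVec a b).trace = a ⬝ᵥ b := by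
  simp [Matrix.trace, Matrix.diag, vecMulVec_apply, dotProduct]

/-- `A` is represented as `∑ i, σ i • u i ⬝ (v i)ᵀ` with `σ` nonneg and `u`, `v`
orthonormal on the support of `σ`. -/
structure IsRep {ι : Type*} [Fintype ι] [DecidableEq ι] (A : Matrix (Fin m) (Fin n) ℝ)
    (σ : ι → ℝ) (u : ι → Fin m → ℝ) (v : ι → Fin n → ℝ) : Prop where
  hσ : ∀ i, 0 ≤ σ i
  hu : ∀ i j, σ i ≠ 0 → σ j ≠ 0 → u i ⬝ᵥ u j = if i = j then 1 else 0
  hv : ∀ i j, σ i ≠ 0 → σ j ≠ 0 → v i ⬝ᵥ v j = if i = j then 1 else 0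
  hA : A = ∑ i, σ i • vecMulVec (u i) (v i)


lemma sum_mulVec {a b : ℕ} {ι : Type*} (s : Finset ι) (f : ι → Matrix (Fin a) (Fin b) ℝ)
    (x : Fin b → ℝ) : (∑ i ∈ s, f i) *ᵥ x = ∑ i ∈ s, f i *ᵥ x := by
  classical
  induction s using Finset.induction with
  | empty => simp
  | insert _ _ h ih => rw [Finset.sum_insert h, Finset.sum_insert h, add_mulVec, ih]

lemma dotProduct_finset_sum {b : ℕ} {ι : Type*} (s : Finset ι) (x : Fin b → ℝ)
    (f : ι → Fin b → ℝ) : x ⬝ᵥ (∑ i ∈ s, f i) = ∑ i ∈ s, x ⬝ᵥ f i := by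
  classical
  induction s using Finset.induction with
  | empty => simp
  | insert _ _ h ih => rw [Finset.sum_insert h, Finset.sum_insert h, dotProduct_add, ih]

lemma finner_eq_trace {m n : Type*} [Fintype m] [Fintype n] (A B : Matrix m n ℝ) :
    finner A B = (Aᴴ * B).trace := by
  unfold finner
  simp only [Matrix.trace, Matrix.diag, mul_apply, conjTranspose_apply, star_trivial]
  rw [Finset.sum_comm]

lemma finner_vecMulVec_right {m n : Type*} [Fintype m] [Fintype n]
    (M : Matrix m n ℝ) (a : m → ℝ) (b : n → ℝ) :
    finner M (vecMulVec a b) = a ⬝ᵥ (M *ᵥ b) := by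
  unfold finner
  simp only [vecMulVec_apply, dotProduct, mulVec, Finset.mul_sum]
  congr 1; ext i; congr 1; ext j; ring

lemma rep_mul_rep {ι : Type*} [Fintype ι] [DecidableEq ι] {p q : ℕ}
    (σ τ : ι → ℝ) (a : ι → Fin p → ℝ) (b c : ι → Fin n → ℝ) (d : ι → Fin q → ℝ)
    (h : ∀ i j, σ i * τ j * (b i ⬝ᵥ c j) = if i = j then σ i * τ j else 0) :
    (∑ i, σ i • vecMulVec (a i) (b i)) * (∑ j, τ j • vecMulVec (c j) (d j)) =
      ∑ i, (σ i * τ i) • vecMulVec (a i) (d i) := by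
  rw [Matrix.sum_mul]
  simp_rw [Matrix.mul_sum]
  have : ∀ i j, (σ i • vecMulVec (a i) (b i)) * (τ j • vecMulVec (c j) (d j)) =
      (σ i * τ j * (b i ⬝ᵥ c j)) • vecMulVec (a i) (d j) := by
    intro i j
    rw [Matrix.smul_mul, Matrix.mul_smul, vecMulVec_mul_vecMulVec, smul_smul, smul_smul,
      mul_assoc]
  refine Finset.sum_congr rfl fun i _ => ?_
  rw [Finset.sum_congr rfl fun j _ => this i j]
  rw [Finset.sum_eq_single i]
  · rw [h i i, if_pos rfl]
  · intro j _ hj; rw [h i j, if_neg (Ne.symm hj), zero_smul]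
  · intro hi; exact absurd (Finset.mem_univ i) hi

variable {ι : Type*} [Fintype ι] [DecidableEq ι] {A : Matrix (Fin m) (Fin n) ℝ}
  {σ : ι → ℝ} {u : ι → Fin m → ℝ} {v : ι → Fin n → ℝ}

lemma IsRep.delta_u (h : IsRep A σ u v) (i j : ι) :
    σ i * σ j * (u i ⬝ᵥ u j) = if i = j then σ i * σ j else 0 := by
  by_cases hi : σ i = 0
  · simp [hi]
  by_cases hj : σ j = 0
  · simp [hj]
  rw [h.hu i j hi hj]
  by_cases hij : i = j <;> simp [hij]

lemma IsRep.delta_v (h : IsRep A σ u v) (i j : ι) :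
    σ i * σ j * (v i ⬝ᵥ v j) = if i = j then σ i * σ j else 0 := by
  by_cases hi : σ i = 0
  · simp [hi]
  by_cases hj : σ j = 0
  · simp [hj]
  rw [h.hv i j hi hj]
  by_cases hij : i = j <;> simp [hij]

lemma IsRep.conjTranspose_eq (h : IsRep A σ u v) :
    Aᴴ = ∑ i, σ i • vecMulVec (v i) (u i) := by
  rw [h.hA, conjTranspose_sum]
  refine Finset.sum_congr rfl fun i _ => ?_
  rw [conjTranspose_smul, vecMulVec_conjTranspose]
  simp

lemma IsRep.conjTranspose_mul_self_eq (h : IsRep A σ u v) :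
    Aᴴ * A = ∑ i, (σ i * σ i) • vecMulVec (v i) (v i) := by
  rw [h.conjTranspose_eq, h.hA]
  exact rep_mul_rep σ σ v u u v h.delta_u

/-- The candidate square root of `AᴴA`. -/
lemma IsRep.sqrtCand_posSemidef (h : IsRep A σ u v) :
    (∑ i, σ i • vecMulVec (v i) (v i)).PosSemidef := by
  refine Matrix.PosSemidef.of_dotProduct_mulVec_nonneg ?_ ?_
  · unfold IsHermitian
    rw [conjTranspose_sum]
    refine Finset.sum_congr rfl fun i _ => ?_
    rw [conjTranspose_smul, vecMulVec_conjTranspose]; simp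
  · intro x
    rw [show (star x : Fin n → ℝ) = x from star_trivial x]
    rw [RFP.sum_mulVec]
    have : ∀ i : ι, (σ i • vecMulVec (v i) (v i)) *ᵥ x = (σ i * (v i ⬝ᵥ x)) • v i := by
      intro i; rw [Matrix.smul_mulVec, vecMulVec_mulVec, smul_smul]
    rw [Finset.sum_congr rfl fun i _ => this i]
    rw [dotProduct_finset_sum]
    refine Finset.sum_nonneg fun i _ => ?_
    rw [dotProduct_smul]
    have : x ⬝ᵥ v i = v i ⬝ᵥ x := dotProduct_comm _ _
    rw [smul_eq_mul, this, mul_assoc]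
    exact mul_nonneg (h.hσ i) (mul_self_nonneg _)

lemma IsRep.sqrtCand_sq (h : IsRep A σ u v) :
    (∑ i, σ i • vecMulVec (v i) (v i)) ^ 2 = Aᴴ * A := by
  rw [pow_two, rep_mul_rep σ σ v v v v h.delta_v, h.conjTranspose_mul_self_eq]

lemma IsRep.nucNorm_eq (h : IsRep A σ u v) : nucNorm A = ∑ i, σ i := by
  have key : (posSemidef_conjTranspose_mul_self A).1.cfc Real.sqrt
      = ∑ i, σ i • vecMulVec (v i) (v i) := by
    open scoped MatrixOrder in
    have e : CFC.sqrt (Aᴴ * A) = ∑ i, σ i • vecMulVec (v i) (v i) :=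
      CFC.sqrt_unique (by rw [← pow_two]; exact h.sqrtCand_sq) h.sqrtCand_posSemidef.nonneg
    open scoped MatrixOrder in
    rw [CFC.sqrt_eq_real_sqrt _ (posSemidef_conjTranspose_mul_self A).nonneg, cfcₙ_eq_cfc,
      IsHermitian.cfc_eq (posSemidef_conjTranspose_mul_self A).1] at e
    exact e
  have e2 : nucNorm A = ((posSemidef_conjTranspose_mul_self A).1.cfc Real.sqrt).trace := rfl
  rw [e2, key, trace_sum]
  refine Finset.sum_congr rfl fun i _ => ?_
  rw [Matrix.trace_smul, trace_vecMulVec, smul_eq_mul]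
  by_cases hi : σ i = 0
  · simp [hi]
  · rw [h.hv i i hi hi, if_pos rfl, mul_one]

lemma IsRep.finner_self (h : IsRep A σ u v) : finner A A = ∑ i, σ i * σ i := by
  rw [finner_eq_trace, h.conjTranspose_mul_self_eq, trace_sum]
  refine Finset.sum_congr rfl fun i _ => ?_
  rw [Matrix.trace_smul, trace_vecMulVec, smul_eq_mul]
  by_cases hi : σ i = 0
  · simp [hi]
  · rw [h.hv i i hi hi, if_pos rfl, mul_one]

lemma IsRep.frobNorm_sq_eq (h : IsRep A σ u v) : frobNorm A ^ 2 = ∑ i, σ i * σ i := by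
  rw [frobNorm_sq, h.finner_self]

lemma rank_add_le (A B : Matrix (Fin m) (Fin n) ℝ) : (A + B).rank ≤ A.rank + B.rank := by
  have hle : LinearMap.range (A + B).mulVecLin ≤
      LinearMap.range A.mulVecLin ⊔ LinearMap.range B.mulVecLin := by
    rintro x ⟨y, rfl⟩
    exact Submodule.mem_sup.2 ⟨A *ᵥ y, ⟨y, rfl⟩, B *ᵥ y, ⟨y, rfl⟩, by
      simp [Matrix.mulVecLin_apply, Matrix.add_mulVec]⟩
  calc (A + B).rank = Module.finrank ℝ (LinearMap.range (A + B).mulVecLin) := rfl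
    _ ≤ Module.finrank ℝ ↥(LinearMap.range A.mulVecLin ⊔ LinearMap.range B.mulVecLin) :=
        Submodule.finrank_mono hle
    _ ≤ A.rank + B.rank := Submodule.finrank_add_le_finrank_add_finrank _ _

lemma rank_sum_le {ι : Type*} (s : Finset ι) (f : ι → Matrix (Fin m) (Fin n) ℝ) :
    (∑ i ∈ s, f i).rank ≤ ∑ i ∈ s, (f i).rank := by
  classical
  induction s using Finset.induction with
  | empty => simp
  | insert _ _ h ih =>
      rw [Finset.sum_insert h, Finset.sum_insert h]
      exact le_trans (rank_add_le _ _) (by omega)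

lemma rank_vecMulVec_le_one (a : Fin m → ℝ) (b : Fin n → ℝ) :
    (vecMulVec a b).rank ≤ 1 := by
  rw [vecMulVec_eq (ι := Unit)]
  calc (replicateCol Unit a * replicateRow Unit b).rank ≤ (replicateRow Unit b).rank := rank_mul_le_right _ _
    _ ≤ Fintype.card Unit := rank_le_card_height _
    _ = 1 := by simp

lemma smul_vecMulVec (c : ℝ) (a : Fin m → ℝ) (b : Fin n → ℝ) :
    c • vecMulVec a b = vecMulVec (c • a) b := by
  ext i j; simp [vecMulVec_apply, mul_assoc]

lemma IsRep.rank_le {ι : Type*} [Fintype ι] [DecidableEq ι] {A : Matrix (Fin m) (Fin n) ℝ}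
    {σ : ι → ℝ} {u : ι → Fin m → ℝ} {v : ι → Fin n → ℝ} (h : IsRep A σ u v) :
    A.rank ≤ (Finset.univ.filter fun i => σ i ≠ 0).card := by
  classical
  have hA' : A = ∑ i ∈ Finset.univ.filter (fun i => σ i ≠ 0), σ i • vecMulVec (u i) (v i) := by
    rw [h.hA]
    refine (Finset.sum_filter_of_ne fun i _ hne => ?_).symm
    intro hσ0
    exact hne (by rw [hσ0, zero_smul])
  calc A.rank ≤ ∑ i ∈ Finset.univ.filter (fun i => σ i ≠ 0),
        (σ i • vecMulVec (u i) (v i)).rank := by rw [hA']; exact rank_sum_le _ _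
    _ ≤ ∑ _i ∈ Finset.univ.filter (fun i => σ i ≠ 0), 1 := by
        refine Finset.sum_le_sum fun i _ => ?_
        rw [smul_vecMulVec]; exact rank_vecMulVec_le_one _ _
    _ = (Finset.univ.filter fun i => σ i ≠ 0).card := by simp

lemma mul_vecMulVec {p : ℕ} (A : Matrix (Fin m) (Fin n) ℝ) (x : Fin n → ℝ) (y : Fin p → ℝ) :
    A * vecMulVec x y = vecMulVec (A *ᵥ x) y := by
  ext i j
  simp only [mul_apply, vecMulVec_apply, mulVec, dotProduct, Finset.sum_mul]
  congr 1; ext k; ring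

lemma dot_mulVec_mulVec (A : Matrix (Fin m) (Fin n) ℝ) (x y : Fin n → ℝ) :
    (A *ᵥ x) ⬝ᵥ (A *ᵥ y) = x ⬝ᵥ ((Aᴴ * A) *ᵥ y) := by
  rw [← mulVec_mulVec, dotProduct_mulVec x, vecMul_conjTranspose]
  simp

lemma exists_svd (A : Matrix (Fin m) (Fin n) ℝ) :
    ∃ (σ : Fin n → ℝ) (u : Fin n → Fin m → ℝ) (v : Fin n → Fin n → ℝ),
      IsRep A σ u v ∧ Antitone σ ∧
      (Finset.univ.filter fun i => σ i ≠ 0).card = A.rank := by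
  classical
  set H := Aᴴ * A with hHdef
  have hH : H.PosSemidef := posSemidef_conjTranspose_mul_self A
  have herm : H.IsHermitian := hH.1
  set b := herm.eigenvectorBasis with hbdef
  set μ := herm.eigenvalues with hμdef
  have hμ0 : ∀ i, 0 ≤ μ i := fun i => hH.eigenvalues_nonneg i
  set v₀ : Fin n → Fin n → ℝ := fun j => ⇑(b j) with hv₀
  have hvdot : ∀ i j, v₀ i ⬝ᵥ v₀ j = if i = j then 1 else 0 := by
    intro i j
    have horth := b.orthonormal
    have h1 : (inner ℝ (b i) (b j) : ℝ) = v₀ i ⬝ᵥ v₀ j := by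
      simp [PiLp.inner_apply, RCLike.inner_apply, dotProduct, v₀, mul_comm]
    rw [← h1, orthonormal_iff_ite.1 horth]
  have hmv : ∀ j, H *ᵥ v₀ j = μ j • v₀ j := fun j => herm.mulVec_eigenvectorBasis j
  have hAvdot : ∀ i j, (A *ᵥ v₀ i) ⬝ᵥ (A *ᵥ v₀ j) = μ j * (if i = j then 1 else 0) := by
    intro i j
    rw [dot_mulVec_mulVec, ← hHdef, hmv j, dotProduct_smul, smul_eq_mul, hvdot]
  set σ : Fin n → ℝ := fun j => Real.sqrt (μ j) with hσdef
  have hσ0 : ∀ j, 0 ≤ σ j := fun j => Real.sqrt_nonneg _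
  have hσsq : ∀ j, σ j * σ j = μ j := fun j => Real.mul_self_sqrt (hμ0 j)
  have hσne : ∀ j, σ j ≠ 0 ↔ μ j ≠ 0 := by
    intro j
    constructor
    · intro h hμ; exact h (by rw [hσdef]; simp [hμ])
    · intro h hσ; exact h (by rw [← hσsq j, hσ, mul_zero])
  set u : Fin n → Fin m → ℝ := fun j => if σ j = 0 then 0 else (σ j)⁻¹ • (A *ᵥ v₀ j) with hudef
  have hAv : ∀ j, A *ᵥ v₀ j = σ j • u j := by
    intro j
    by_cases hj : σ j = 0
    · have hμj : μ j = 0 := by by_contra hc; exact (hσne j).2 hc hj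
      have : (A *ᵥ v₀ j) ⬝ᵥ (A *ᵥ v₀ j) = 0 := by rw [hAvdot j j, hμj, zero_mul]
      have hz : A *ᵥ v₀ j = 0 := by
        ext i
        have h1 : ∀ i ∈ Finset.univ, (0:ℝ) ≤ (A *ᵥ v₀ j) i * (A *ᵥ v₀ j) i :=
          fun i _ => mul_self_nonneg _
        have := (Finset.sum_eq_zero_iff_of_nonneg h1).1 this i (Finset.mem_univ i)
        simpa [mul_self_eq_zero] using this
      rw [hz, hj, zero_smul]
    · rw [hudef]
      simp only [if_neg hj, smul_smul]
      rw [mul_inv_cancel₀ hj, one_smul]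
  have hudot : ∀ i j, σ i ≠ 0 → σ j ≠ 0 → u i ⬝ᵥ u j = if i = j then 1 else 0 := by
    intro i j hi hj
    rw [hudef]
    simp only [if_neg hi, if_neg hj]
    rw [smul_dotProduct, dotProduct_smul, hAvdot i j, smul_eq_mul, smul_eq_mul]
    rcases eq_or_ne i j with rfl | hij
    · rw [if_pos rfl, mul_one, ← hσsq i]
      field_simp
    · simp [hij]
  have hres : (1 : Matrix (Fin n) (Fin n) ℝ) = ∑ j, vecMulVec (v₀ j) (v₀ j) := by
    ext a c
    have h := b.sum_inner_mul_inner (EuclideanSpace.single a (1:ℝ)) (EuclideanSpace.single c (1:ℝ))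
    simp only [EuclideanSpace.inner_single_left, EuclideanSpace.inner_single_right,
      starRingEnd_apply, star_trivial, one_mul, mul_one] at h
    have h2 : (∑ j, vecMulVec (v₀ j) (v₀ j)) a c = ∑ x, b x a * b x c := by
      rw [Matrix.sum_apply]
      refine Finset.sum_congr rfl fun j _ => ?_
      simp [vecMulVec_apply, v₀]
    rw [h2, h, Matrix.one_apply, EuclideanSpace.single_apply]
    simp [eq_comm]
  have hrep : IsRep A σ u v₀ := by
    refine ⟨hσ0, hudot, fun i j hi hj => hvdot i j, ?_⟩
    conv_lhs => rw [← Matrix.mul_one A]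
    rw [hres, Matrix.mul_sum]
    refine Finset.sum_congr rfl fun j _ => ?_
    rw [mul_vecMulVec, hAv j, ← smul_vecMulVec]
  have hcard : (Finset.univ.filter fun i => σ i ≠ 0).card = A.rank := by
    rw [← rank_conjTranspose_mul_self A, ← hHdef, herm.rank_eq_card_non_zero_eigs]
    rw [← hμdef]
    rw [Fintype.card_subtype]
    congr 1
    ext i
    simp [hσne i]
  -- sort to make σ antitone
  set π := Tuple.sort (fun i => -σ i) with hπ
  have hmono := Tuple.monotone_sort (fun i => -σ i)
  refine ⟨σ ∘ π, u ∘ π, v₀ ∘ π, ?_, ?_, ?_⟩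
  · refine ⟨fun i => hσ0 _, fun i j hi hj => ?_, fun i j hi hj => ?_, ?_⟩
    · rw [Function.comp_apply, Function.comp_apply, hudot _ _ hi hj]
      simp [π.injective.eq_iff]
    · rw [Function.comp_apply, Function.comp_apply, hvdot]
      simp [π.injective.eq_iff]
    · rw [hrep.hA]
      exact (Equiv.sum_comp π (fun i => σ i • vecMulVec (u i) (v₀ i))).symm
  · intro i j hij
    have := hmono hij
    simp only [Function.comp_apply, neg_le_neg_iff] at this
    exact this
  · rw [← hcard]
    apply Finset.card_nbij (i := fun i => π i)
    · intro a ha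
      simp only [Finset.coe_filter, Set.mem_setOf_eq, Finset.mem_filter, Finset.mem_univ,
        true_and, Function.comp_apply] at ha ⊢
      exact ha
    · intro a ha c hc hac
      exact π.injective hac
    · intro c hc
      simp only [Finset.coe_filter, Set.mem_setOf_eq, Finset.mem_filter, Finset.mem_univ, true_and, Set.mem_image, Function.comp_apply] at hc ⊢
      exact ⟨π.symm c, by simpa using hc, by simp⟩

lemma finset_sum_dotProduct {b : ℕ} {ι : Type*} (s : Finset ι) (f : ι → Fin b → ℝ)
    (x : Fin b → ℝ) : (∑ i ∈ s, f i) ⬝ᵥ x = ∑ i ∈ s, f i ⬝ᵥ x := by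
  classical
  induction s using Finset.induction with
  | empty => simp
  | insert _ _ h ih => rw [Finset.sum_insert h, Finset.sum_insert h, add_dotProduct, ih]

lemma bessel {k : ℕ} {ι : Type*} [DecidableEq ι] (t : Finset ι) (p : ι → Fin k → ℝ)
    (hp : ∀ i ∈ t, ∀ j ∈ t, p i ⬝ᵥ p j = if i = j then 1 else 0) (x : Fin k → ℝ) :
    ∑ j ∈ t, (x ⬝ᵥ p j) ^ 2 ≤ x ⬝ᵥ x := by
  set y : Fin k → ℝ := x - ∑ j ∈ t, (x ⬝ᵥ p j) • p j with hy
  have h0 : 0 ≤ y ⬝ᵥ y := Finset.sum_nonneg fun i _ => mul_self_nonneg _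
  have hyy : y ⬝ᵥ y = x ⬝ᵥ x - ∑ j ∈ t, (x ⬝ᵥ p j) ^ 2 := by
    rw [hy, sub_dotProduct, dotProduct_sub, dotProduct_sub]
    rw [dotProduct_finset_sum, finset_sum_dotProduct, finset_sum_dotProduct]
    have e1 : ∑ j ∈ t, x ⬝ᵥ (x ⬝ᵥ p j) • p j = ∑ j ∈ t, (x ⬝ᵥ p j) ^ 2 := by
      refine Finset.sum_congr rfl fun j _ => ?_
      rw [dotProduct_smul, smul_eq_mul, sq]
    have e2 : ∑ j ∈ t, ((x ⬝ᵥ p j) • p j) ⬝ᵥ x = ∑ j ∈ t, (x ⬝ᵥ p j) ^ 2 := by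
      refine Finset.sum_congr rfl fun j _ => ?_
      rw [smul_dotProduct, smul_eq_mul, dotProduct_comm, sq]
    have e3 : ∑ i ∈ t, ((x ⬝ᵥ p i) • p i) ⬝ᵥ (∑ j ∈ t, (x ⬝ᵥ p j) • p j)
        = ∑ j ∈ t, (x ⬝ᵥ p j) ^ 2 := by
      refine Finset.sum_congr rfl fun i hi => ?_
      rw [dotProduct_finset_sum]
      rw [Finset.sum_eq_single i]
      · rw [smul_dotProduct, dotProduct_smul, hp i hi i hi, if_pos rfl]
        simp [sq]
      · intro j hj hji
        rw [smul_dotProduct, dotProduct_smul, hp i hi j hj, if_neg (Ne.symm hji)]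
        simp
      · intro hi'; exact absurd hi hi'
    rw [e1, e2, e3]; ring
  rw [hyy] at h0; linarith

lemma finner_add_left {m n : Type*} [Fintype m] [Fintype n] (A B C : Matrix m n ℝ) :
    finner (A + B) C = finner A C + finner B C := by
  unfold finner
  rw [← Finset.sum_add_distrib]
  refine Finset.sum_congr rfl fun i _ => ?_
  rw [← Finset.sum_add_distrib]
  refine Finset.sum_congr rfl fun j _ => ?_
  simp [add_mul]

lemma finner_sum_left {m n : Type*} [Fintype m] [Fintype n] {ι : Type*} (s : Finset ι)
    (f : ι → Matrix m n ℝ) (B : Matrix m n ℝ) :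
    finner (∑ i ∈ s, f i) B = ∑ i ∈ s, finner (f i) B := by
  classical
  induction s using Finset.induction with
  | empty => simp [finner]
  | insert _ _ h ih => rw [Finset.sum_insert h, Finset.sum_insert h, finner_add_left, ih]

lemma finner_smul_left {m n : Type*} [Fintype m] [Fintype n] (c : ℝ) (A B : Matrix m n ℝ) :
    finner (c • A) B = c * finner A B := by
  unfold finner
  rw [Finset.mul_sum]
  refine Finset.sum_congr rfl fun i _ => ?_
  rw [Finset.mul_sum]
  refine Finset.sum_congr rfl fun j _ => ?_
  simp [mul_assoc]

lemma finner_vecMulVec_vecMulVec (a : Fin m → ℝ) (b : Fin n → ℝ) (c : Fin m → ℝ)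
    (d : Fin n → ℝ) : finner (vecMulVec a b) (vecMulVec c d) = (a ⬝ᵥ c) * (b ⬝ᵥ d) := by
  unfold finner
  simp only [vecMulVec_apply, dotProduct]
  rw [Finset.sum_mul_sum]
  refine Finset.sum_congr rfl fun i _ => ?_
  refine Finset.sum_congr rfl fun j _ => ?_
  ring

/-- The key duality bound: pairing any matrix against a partial isometry is at most
the sum of σ's of any representation. -/
lemma IsRep.finner_partialIso_le {ι κ : Type*} [Fintype ι] [DecidableEq ι] [DecidableEq κ]
    {A : Matrix (Fin m) (Fin n) ℝ} {σ : ι → ℝ} {u : ι → Fin m → ℝ} {v : ι → Fin n → ℝ}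
    (h : IsRep A σ u v) (t : Finset κ) (p : κ → Fin m → ℝ) (q : κ → Fin n → ℝ)
    (hp : ∀ i ∈ t, ∀ j ∈ t, p i ⬝ᵥ p j = if i = j then 1 else 0)
    (hq : ∀ i ∈ t, ∀ j ∈ t, q i ⬝ᵥ q j = if i = j then 1 else 0) :
    finner A (∑ j ∈ t, vecMulVec (p j) (q j)) ≤ ∑ i, σ i := by
  classical
  rw [h.hA, finner_sum_left]
  refine Finset.sum_le_sum fun i _ => ?_
  rw [finner_smul_left]
  by_cases hi : σ i = 0
  · rw [hi, zero_mul]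
  have huu : u i ⬝ᵥ u i = 1 := by rw [h.hu i i hi hi, if_pos rfl]
  have hvv : v i ⬝ᵥ v i = 1 := by rw [h.hv i i hi hi, if_pos rfl]
  have hbound : finner (vecMulVec (u i) (v i)) (∑ j ∈ t, vecMulVec (p j) (q j)) ≤ 1 := by
    have e1 : finner (vecMulVec (u i) (v i)) (∑ j ∈ t, vecMulVec (p j) (q j))
        = ∑ j ∈ t, (u i ⬝ᵥ p j) * (v i ⬝ᵥ q j) := by
      rw [finner_comm, finner_sum_left]
      refine Finset.sum_congr rfl fun j _ => ?_
      rw [finner_comm, finner_vecMulVec_vecMulVec]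
    rw [e1]
    have cs : (∑ j ∈ t, (u i ⬝ᵥ p j) * (v i ⬝ᵥ q j)) ^ 2 ≤
        (∑ j ∈ t, (u i ⬝ᵥ p j) ^ 2) * (∑ j ∈ t, (v i ⬝ᵥ q j) ^ 2) :=
      Finset.sum_mul_sq_le_sq_mul_sq t _ _
    have b1 : ∑ j ∈ t, (u i ⬝ᵥ p j) ^ 2 ≤ 1 := huu ▸ bessel t p hp (u i)
    have b2 : ∑ j ∈ t, (v i ⬝ᵥ q j) ^ 2 ≤ 1 := hvv ▸ bessel t q hq (v i)
    nlinarith [Finset.sum_nonneg (fun j (_ : j ∈ t) => sq_nonneg (u i ⬝ᵥ p j)),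
      Finset.sum_nonneg (fun j (_ : j ∈ t) => sq_nonneg (v i ⬝ᵥ q j))]
  calc σ i * finner (vecMulVec (u i) (v i)) (∑ j ∈ t, vecMulVec (p j) (q j))
      ≤ σ i * 1 := mul_le_mul_of_nonneg_left hbound (h.hσ i)
    _ = σ i := mul_one _

lemma IsRep.finner_partialIso_eq {ι : Type*} [Fintype ι] [DecidableEq ι]
    {A : Matrix (Fin m) (Fin n) ℝ} {σ : ι → ℝ} {u : ι → Fin m → ℝ} {v : ι → Fin n → ℝ}
    (h : IsRep A σ u v) :
    finner A (∑ j ∈ Finset.univ.filter (fun j => σ j ≠ 0), vecMulVec (u j) (v j)) = ∑ i, σ i := by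
  classical
  rw [h.hA, finner_sum_left]
  refine Finset.sum_congr rfl fun i _ => ?_
  rw [finner_smul_left]
  by_cases hi : σ i = 0
  · simp [hi]
  have e1 : finner (vecMulVec (u i) (v i))
      (∑ j ∈ Finset.univ.filter (fun j => σ j ≠ 0), vecMulVec (u j) (v j)) = 1 := by
    rw [finner_comm, finner_sum_left]
    rw [Finset.sum_eq_single i]
    · rw [finner_comm, finner_vecMulVec_vecMulVec, h.hu i i hi hi, h.hv i i hi hi]
      simp
    · intro j hj hji
      have hjne : σ j ≠ 0 := (Finset.mem_filter.1 hj).2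
      rw [finner_comm, finner_vecMulVec_vecMulVec, h.hu i j hi hjne, if_neg (Ne.symm hji),
        zero_mul]
    · intro hi'
      exact absurd (Finset.mem_filter.2 ⟨Finset.mem_univ i, hi⟩) hi'
  rw [e1, mul_one]

lemma nucNorm_triangle (A B : Matrix (Fin m) (Fin n) ℝ) :
    nucNorm (A + B) ≤ nucNorm A + nucNorm B := by
  classical
  obtain ⟨τ, p, q, hrep, -, -⟩ := exists_svd (A + B)
  set t := Finset.univ.filter (fun j => τ j ≠ 0) with ht
  have hp : ∀ i ∈ t, ∀ j ∈ t, p i ⬝ᵥ p j = if i = j then 1 else 0 := fun i hi j hj =>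
    hrep.hu i j (Finset.mem_filter.1 hi).2 (Finset.mem_filter.1 hj).2
  have hq : ∀ i ∈ t, ∀ j ∈ t, q i ⬝ᵥ q j = if i = j then 1 else 0 := fun i hi j hj =>
    hrep.hv i j (Finset.mem_filter.1 hi).2 (Finset.mem_filter.1 hj).2
  have key : nucNorm (A + B) = finner (A + B) (∑ j ∈ t, vecMulVec (p j) (q j)) := by
    rw [hrep.nucNorm_eq, hrep.finner_partialIso_eq]
  rw [key, finner_add_left]
  obtain ⟨σA, uA, vA, hA, -, -⟩ := exists_svd A
  obtain ⟨σB, uB, vB, hB, -, -⟩ := exists_svd B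
  have h1 := hA.finner_partialIso_le t p q hp hq
  have h2 := hB.finner_partialIso_le t p q hp hq
  rw [hA.nucNorm_eq, hB.nucNorm_eq]
  exact add_le_add h1 h2

lemma vecMulVec_neg_left (a : Fin m → ℝ) (b : Fin n → ℝ) :
    vecMulVec (-a) b = -vecMulVec a b := by
  ext i j; simp [vecMulVec_apply]

lemma IsRep.neg {ι : Type*} [Fintype ι] [DecidableEq ι] {A : Matrix (Fin m) (Fin n) ℝ}
    {σ : ι → ℝ} {u : ι → Fin m → ℝ} {v : ι → Fin n → ℝ} (h : IsRep A σ u v) :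
    IsRep (-A) σ (fun i => -u i) v := by
  refine ⟨h.hσ, fun i j hi hj => ?_, h.hv, ?_⟩
  · rw [neg_dotProduct, dotProduct_neg, neg_neg]; exact h.hu i j hi hj
  · rw [h.hA, ← Finset.sum_neg_distrib]
    refine Finset.sum_congr rfl fun i _ => ?_
    rw [vecMulVec_neg_left]
    simp

lemma nucNorm_neg (A : Matrix (Fin m) (Fin n) ℝ) : nucNorm (-A) = nucNorm A := by
  obtain ⟨σ, u, v, h, -, -⟩ := exists_svd A
  rw [h.neg.nucNorm_eq, h.nucNorm_eq]

lemma nucNorm_nonneg (A : Matrix (Fin m) (Fin n) ℝ) : 0 ≤ nucNorm A := by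
  obtain ⟨σ, u, v, h, -, -⟩ := exists_svd A
  rw [h.nucNorm_eq]
  exact Finset.sum_nonneg fun i _ => h.hσ i

lemma eq_zero_of_nucNorm_nonpos {A : Matrix (Fin m) (Fin n) ℝ} (h : nucNorm A ≤ 0) :
    A = 0 := by
  classical
  obtain ⟨σ, u, v, hrep, -, -⟩ := exists_svd A
  have hsum : ∑ i, σ i = 0 := le_antisymm (by rwa [hrep.nucNorm_eq] at h)
    (Finset.sum_nonneg fun i _ => hrep.hσ i)
  have hz : ∀ i ∈ Finset.univ, σ i = 0 :=
    (Finset.sum_eq_zero_iff_of_nonneg fun i _ => hrep.hσ i).1 hsum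
  rw [hrep.hA]
  refine Finset.sum_eq_zero fun i _ => ?_
  rw [hz i (Finset.mem_univ i), zero_smul]

lemma frobNorm_eq_zero_iff {A : Matrix (Fin m) (Fin n) ℝ} : frobNorm A = 0 ↔ A = 0 := by
  constructor
  · intro h
    have := frobNorm_sq A
    rw [h] at this
    exact eq_zero_of_finner_self_eq_zero (by linarith [this.symm] : finner A A = 0)
  · intro h; subst h
    unfold frobNorm
    simp

lemma nucNorm_le_sqrt_rank_mul_frobNorm (A : Matrix (Fin m) (Fin n) ℝ) :
    nucNorm A ≤ Real.sqrt (A.rank) * frobNorm A := by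
  classical
  obtain ⟨σ, u, v, h, -, hcard⟩ := exists_svd A
  set t := Finset.univ.filter (fun i => σ i ≠ 0) with ht
  have hσt : ∑ i, σ i = ∑ i ∈ t, σ i := by
    refine (Finset.sum_filter_of_ne fun i _ hne => hne).symm
  have hsq : (∑ i ∈ t, σ i) ^ 2 ≤ (t.card : ℝ) * ∑ i ∈ t, σ i ^ 2 :=
    sq_sum_le_card_mul_sum_sq
  have hσ2 : ∑ i ∈ t, σ i ^ 2 ≤ frobNorm A ^ 2 := by
    rw [h.frobNorm_sq_eq]
    have hss : ∑ i, σ i * σ i = ∑ i, σ i ^ 2 :=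
      Finset.sum_congr rfl fun i _ => (sq (σ i)).symm
    rw [hss]
    exact Finset.sum_le_sum_of_subset_of_nonneg (Finset.subset_univ t)
      (fun i _ _ => sq_nonneg _)
  have hnn : 0 ≤ ∑ i, σ i := Finset.sum_nonneg fun i _ => h.hσ i
  have key : (∑ i, σ i) ^ 2 ≤ (A.rank : ℝ) * frobNorm A ^ 2 := by
    rw [hσt, ← hcard]
    calc (∑ i ∈ t, σ i) ^ 2 ≤ (t.card : ℝ) * ∑ i ∈ t, σ i ^ 2 := hsq
      _ ≤ (t.card : ℝ) * frobNorm A ^ 2 := by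
          exact mul_le_mul_of_nonneg_left hσ2 (Nat.cast_nonneg _)
  rw [h.nucNorm_eq]
  have h2 : Real.sqrt ((∑ i, σ i) ^ 2) ≤ Real.sqrt ((A.rank : ℝ) * frobNorm A ^ 2) :=
    Real.sqrt_le_sqrt key
  rw [Real.sqrt_sq hnn, Real.sqrt_mul (Nat.cast_nonneg _), Real.sqrt_sq (frobNorm_nonneg A)]
    at h2
  exact h2

lemma nucNorm_add_of_orth {ι κ : Type*} [Fintype ι] [DecidableEq ι] [Fintype κ] [DecidableEq κ]
    {A B : Matrix (Fin m) (Fin n) ℝ} {σ : ι → ℝ} {u : ι → Fin m → ℝ} {v : ι → Fin n → ℝ}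
    {τ : κ → ℝ} {p : κ → Fin m → ℝ} {q : κ → Fin n → ℝ}
    (h1 : IsRep A σ u v) (h2 : IsRep B τ p q)
    (hup : ∀ i j, σ i ≠ 0 → τ j ≠ 0 → u i ⬝ᵥ p j = 0)
    (hvq : ∀ i j, σ i ≠ 0 → τ j ≠ 0 → v i ⬝ᵥ q j = 0) :
    nucNorm (A + B) = nucNorm A + nucNorm B := by
  classical
  have hcomb : IsRep (A + B) (Sum.elim σ τ) (Sum.elim u p) (Sum.elim v q) := by
    refine ⟨?_, ?_, ?_, ?_⟩
    · rintro (i | i)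
      · exact h1.hσ i
      · exact h2.hσ i
    · rintro (i | i) (j | j) hi hj
      · rw [Sum.elim_inl, Sum.elim_inl, h1.hu i j hi hj]
        simp
      · rw [Sum.elim_inl, Sum.elim_inr, hup i j hi hj]
        simp
      · rw [Sum.elim_inr, Sum.elim_inl, dotProduct_comm, hup j i hj hi]
        simp
      · rw [Sum.elim_inr, Sum.elim_inr, h2.hu i j hi hj]
        simp [Sum.inr.injEq]
    · rintro (i | i) (j | j) hi hj
      · rw [Sum.elim_inl, Sum.elim_inl, h1.hv i j hi hj]
        simp
      · rw [Sum.elim_inl, Sum.elim_inr, hvq i j hi hj]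
        simp
      · rw [Sum.elim_inr, Sum.elim_inl, dotProduct_comm, hvq j i hj hi]
        simp
      · rw [Sum.elim_inr, Sum.elim_inr, h2.hv i j hi hj]
        simp [Sum.inr.injEq]
    · rw [Fintype.sum_sum_type]
      simp only [Sum.elim_inl, Sum.elim_inr]
      rw [← h1.hA, ← h2.hA]
  rw [hcomb.nucNorm_eq, Fintype.sum_sum_type, h1.nucNorm_eq, h2.nucNorm_eq]
  simp

lemma vecMul_finset_sum {a b : ℕ} {ι : Type*} (s : Finset ι) (x : Fin a → ℝ)
    (f : ι → Matrix (Fin a) (Fin b) ℝ) : x ᵥ* (∑ i ∈ s, f i) = ∑ i ∈ s, x ᵥ* f i := by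
  classical
  induction s using Finset.induction with
  | empty => simp
  | insert _ _ h ih => rw [Finset.sum_insert h, Finset.sum_insert h, vecMul_add, ih]

lemma vecMul_vecMulVec (x : Fin m → ℝ) (a : Fin m → ℝ) (b : Fin n → ℝ) :
    x ᵥ* vecMulVec a b = (x ⬝ᵥ a) • b := by
  ext j
  simp only [vecMul, dotProduct, vecMulVec_apply, Pi.smul_apply, smul_eq_mul, Finset.sum_mul]
  congr 1; ext k; ring

/-- Decomposition of a perturbation `R` relative to `X₀`: `R = R0 + Rc` with
`rank R0 ≤ 2 rank X₀`, `Rc` having supports orthogonal to those of `X₀`. -/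
lemma decomp (X₀ R : Matrix (Fin m) (Fin n) ℝ) :
    ∃ (R0 Rc : Matrix (Fin m) (Fin n) ℝ) (τ : Fin n → ℝ) (p : Fin n → Fin m → ℝ)
      (q : Fin n → Fin n → ℝ),
      R = R0 + Rc ∧ IsRep Rc τ p q ∧ Antitone τ ∧ R0.rank ≤ 2 * X₀.rank ∧
      nucNorm (X₀ + Rc) = nucNorm X₀ + nucNorm Rc ∧
      (∀ j, τ j ≠ 0 → finner R0 (vecMulVec (p j) (q j)) = 0) := by
  classical
  obtain ⟨σ, u, v, h0, -, hcard⟩ := exists_svd X₀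
  set t := Finset.univ.filter (fun i => σ i ≠ 0) with htdef
  set P : Matrix (Fin m) (Fin m) ℝ := ∑ i ∈ t, vecMulVec (u i) (u i) with hPdef
  set Q : Matrix (Fin n) (Fin n) ℝ := ∑ i ∈ t, vecMulVec (v i) (v i) with hQdef
  set Rc : Matrix (Fin m) (Fin n) ℝ := (1 - P) * (R * (1 - Q)) with hRcdef
  set R0 : Matrix (Fin m) (Fin n) ℝ := R - Rc with hR0def
  obtain ⟨τ, p, q, hc, hτanti, -⟩ := exists_svd Rc
  have hmem : ∀ i, i ∈ t ↔ σ i ≠ 0 := fun i => by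
    rw [htdef, Finset.mem_filter]
    exact ⟨fun h => h.2, fun h => ⟨Finset.mem_univ i, h⟩⟩
  -- u i annihilates (1 - P) for i in support
  have hPu : ∀ i ∈ t, u i ᵥ* (1 - P) = 0 := by
    intro i hi
    rw [vecMul_sub, vecMul_one, hPdef, vecMul_finset_sum]
    have e : ∑ i' ∈ t, u i ᵥ* vecMulVec (u i') (u i') = u i := by
      rw [Finset.sum_congr rfl fun i' _ => vecMul_vecMulVec (u i) (u i') (u i')]
      rw [Finset.sum_eq_single i]
      · rw [h0.hu i i ((hmem i).1 hi) ((hmem i).1 hi), if_pos rfl, one_smul]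
      · intro j hj hji
        rw [h0.hu i j ((hmem i).1 hi) ((hmem j).1 hj), if_neg (Ne.symm hji), zero_smul]
      · intro hi'; exact absurd hi hi'
    rw [e, sub_self]
  have hQv : ∀ i ∈ t, (1 - Q) *ᵥ v i = 0 := by
    intro i hi
    rw [sub_mulVec, one_mulVec, hQdef, sum_mulVec]
    have e : ∑ i' ∈ t, vecMulVec (v i') (v i') *ᵥ v i = v i := by
      rw [Finset.sum_congr rfl fun i' _ => vecMulVec_mulVec (v i') (v i') (v i)]
      rw [Finset.sum_eq_single i]
      · rw [h0.hv i i ((hmem i).1 hi) ((hmem i).1 hi), if_pos rfl, one_smul]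
      · intro j hj hji
        rw [h0.hv j i ((hmem j).1 hj) ((hmem i).1 hi), if_neg hji, zero_smul]
      · intro hi'; exact absurd hi hi'
    rw [e, sub_self]
  -- cross-orthogonality
  have hucross : ∀ i ∈ t, ∀ j, τ j ≠ 0 → u i ⬝ᵥ p j = 0 := by
    intro i hi j hj
    have h1 : u i ᵥ* Rc = 0 := by
      rw [hRcdef, ← vecMul_vecMul, hPu i hi, zero_vecMul]
    have h2 : u i ᵥ* Rc = ∑ k, (τ k * (u i ⬝ᵥ p k)) • q k := by
      rw [hc.hA, vecMul_finset_sum]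
      refine Finset.sum_congr rfl fun k _ => ?_
      rw [smul_vecMulVec, vecMul_vecMulVec, dotProduct_smul, smul_eq_mul]
    have h3 : (0 : ℝ) = τ j * (u i ⬝ᵥ p j) := by
      have := congrArg (fun w => w ⬝ᵥ q j) (h1.symm.trans h2)
      simp only [zero_dotProduct] at this
      rw [finset_sum_dotProduct] at this
      rw [Finset.sum_eq_single j] at this
      · rw [smul_dotProduct, smul_eq_mul, hc.hv j j hj hj, if_pos rfl, mul_one] at this
        exact this
      · intro k _ hkj
        by_cases hk : τ k = 0
        · rw [smul_dotProduct, smul_eq_mul, hk, zero_mul, zero_mul]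
        · rw [smul_dotProduct, smul_eq_mul, hc.hv k j hk hj, if_neg hkj, mul_zero]
      · intro hj'; exact absurd (Finset.mem_univ j) hj'
    have := h3.symm
    rcases mul_eq_zero.1 this with h | h
    · exact absurd h hj
    · exact h
  have hvcross : ∀ i ∈ t, ∀ j, τ j ≠ 0 → v i ⬝ᵥ q j = 0 := by
    intro i hi j hj
    have h1 : Rc *ᵥ v i = 0 := by
      rw [hRcdef, ← mulVec_mulVec, ← mulVec_mulVec, hQv i hi, mulVec_zero, mulVec_zero]
    have h2 : Rc *ᵥ v i = ∑ k, (τ k * (q k ⬝ᵥ v i)) • p k := by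
      rw [hc.hA, sum_mulVec]
      refine Finset.sum_congr rfl fun k _ => ?_
      rw [smul_mulVec, vecMulVec_mulVec, smul_smul]
    have h3 : (0 : ℝ) = τ j * (q j ⬝ᵥ v i) := by
      have := congrArg (fun w => p j ⬝ᵥ w) (h1.symm.trans h2)
      simp only [dotProduct_zero] at this
      rw [dotProduct_finset_sum] at this
      rw [Finset.sum_eq_single j] at this
      · rw [dotProduct_smul, smul_eq_mul, hc.hu j j hj hj, if_pos rfl, mul_one] at this
        exact this
      · intro k _ hkj
        by_cases hk : τ k = 0
        · rw [dotProduct_smul, smul_eq_mul, hk, zero_mul, zero_mul]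
        · rw [dotProduct_smul, smul_eq_mul, hc.hu j k hj hk, if_neg (Ne.symm hkj), mul_zero]
      · intro hj'; exact absurd (Finset.mem_univ j) hj'
    have h4 := h3.symm
    rcases mul_eq_zero.1 h4 with h | h
    · exact absurd h hj
    · rw [dotProduct_comm] at h; exact h
  -- structure of R0
  have e0 : R0 = P * R + (R - P * R) * Q := by
    rw [hR0def, hRcdef]
    simp only [Matrix.sub_mul, Matrix.mul_sub, Matrix.one_mul, Matrix.mul_one, Matrix.mul_assoc]
    abel
  have hrankP : ∀ (M : Matrix (Fin m) (Fin n) ℝ), (P * M).rank ≤ t.card := by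
    intro M
    calc (P * M).rank ≤ P.rank := rank_mul_le_left _ _
      _ ≤ ∑ i ∈ t, (vecMulVec (u i) (u i)).rank := by rw [hPdef]; exact rank_sum_le _ _
      _ ≤ ∑ _i ∈ t, 1 := Finset.sum_le_sum fun i _ => rank_vecMulVec_le_one _ _
      _ = t.card := by simp
  have hrankQ : ∀ (M : Matrix (Fin m) (Fin n) ℝ), (M * Q).rank ≤ t.card := by
    intro M
    calc (M * Q).rank ≤ Q.rank := rank_mul_le_right _ _
      _ ≤ ∑ i ∈ t, (vecMulVec (v i) (v i)).rank := by rw [hQdef]; exact rank_sum_le _ _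
      _ ≤ ∑ _i ∈ t, 1 := Finset.sum_le_sum fun i _ => rank_vecMulVec_le_one _ _
      _ = t.card := by simp
  have hrank : R0.rank ≤ 2 * X₀.rank := by
    rw [e0]
    calc (P * R + (R - P * R) * Q).rank ≤ (P * R).rank + ((R - P * R) * Q).rank :=
        rank_add_le _ _
      _ ≤ t.card + t.card := add_le_add (hrankP R) (hrankQ _)
      _ = 2 * X₀.rank := by rw [hcard]; ring
  -- additivity of nuclear norm
  have hadd : nucNorm (X₀ + Rc) = nucNorm X₀ + nucNorm Rc := by
    refine nucNorm_add_of_orth h0 hc ?_ ?_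
    · intro i j hi hj; exact hucross i ((hmem i).2 hi) j hj
    · intro i j hi hj; exact hvcross i ((hmem i).2 hi) j hj
  -- Frobenius orthogonality of R0 against the rank-one pieces of Rc
  have hforth : ∀ j, τ j ≠ 0 → finner R0 (vecMulVec (p j) (q j)) = 0 := by
    intro j hj
    rw [finner_vecMulVec_right]
    have hQq : Q *ᵥ q j = 0 := by
      rw [hQdef, sum_mulVec]
      refine Finset.sum_eq_zero fun i hi => ?_
      rw [vecMulVec_mulVec, hvcross i hi j hj, zero_smul]
    have hR0q : R0 *ᵥ q j = P *ᵥ (R *ᵥ q j) := by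
      rw [e0, add_mulVec, ← mulVec_mulVec, ← mulVec_mulVec, hQq, mulVec_zero, add_zero]
    rw [hR0q]
    have hPx : ∀ x : Fin m → ℝ, p j ⬝ᵥ (P *ᵥ x) = 0 := by
      intro x
      rw [hPdef, sum_mulVec, dotProduct_finset_sum]
      refine Finset.sum_eq_zero fun i hi => ?_
      rw [vecMulVec_mulVec, dotProduct_smul, smul_eq_mul, dotProduct_comm (p j) (u i),
        hucross i hi j hj, mul_zero]
    exact hPx _
  exact ⟨R0, Rc, τ, p, q, by rw [hR0def]; abel, hc, hτanti, hrank, hadd, hforth⟩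

lemma blocks (r : ℕ) (hr : 1 ≤ r) {Rc : Matrix (Fin m) (Fin n) ℝ} {τ : Fin n → ℝ}
    {p : Fin n → Fin m → ℝ} {q : Fin n → Fin n → ℝ}
    (hc : IsRep Rc τ p q) (hanti : Antitone τ) :
    ∃ Rb : ℕ → Matrix (Fin m) (Fin n) ℝ,
      (Rc = ∑ j ∈ Finset.range n, Rb j) ∧
      (∀ j, (Rb j).rank ≤ 3 * r) ∧
      (∑ j ∈ Finset.range n, nucNorm (Rb j) = nucNorm Rc) ∧
      (∀ j, frobNorm (Rb (j + 1)) * Real.sqrt (3 * r) ≤ nucNorm (Rb j)) ∧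
      (∀ j (M : Matrix (Fin m) (Fin n) ℝ),
        (∀ k, τ k ≠ 0 → finner M (vecMulVec (p k) (q k)) = 0) → finner M (Rb j) = 0) := by
  classical
  have h3r : 0 < 3 * r := by omega
  set blk : ℕ → Finset (Fin n) := fun j => Finset.univ.filter (fun i => i.val / (3 * r) = j)
    with hblk
  set Rb : ℕ → Matrix (Fin m) (Fin n) ℝ :=
    fun j => ∑ i ∈ blk j, τ i • vecMulVec (p i) (q i) with hRb
  -- each block gives a representation
  have hrep : ∀ j, IsRep (Rb j) (fun i => if i ∈ blk j then τ i else 0) p q := by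
    intro j
    refine ⟨fun i => ?_, fun i i' hi hi' => ?_, fun i i' hi hi' => ?_, ?_⟩
    · by_cases h : i ∈ blk j
      · simp only [if_pos h]; exact hc.hσ i
      · simp only [if_neg h]; exact le_refl 0
    · refine hc.hu i i' ?_ ?_
      · by_cases h : i ∈ blk j
        · rw [if_pos h] at hi; exact hi
        · rw [if_neg h] at hi; exact absurd rfl hi
      · by_cases h : i' ∈ blk j
        · rw [if_pos h] at hi'; exact hi'
        · rw [if_neg h] at hi'; exact absurd rfl hi'
    · refine hc.hv i i' ?_ ?_
      · by_cases h : i ∈ blk j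
        · rw [if_pos h] at hi; exact hi
        · rw [if_neg h] at hi; exact absurd rfl hi
      · by_cases h : i' ∈ blk j
        · rw [if_pos h] at hi'; exact hi'
        · rw [if_neg h] at hi'; exact absurd rfl hi'
    · have hsplit : ∀ i, ((if i ∈ blk j then τ i else 0) • vecMulVec (p i) (q i))
          = if i ∈ blk j then τ i • vecMulVec (p i) (q i) else 0 := by
        intro i; split <;> simp
      have e : ∑ i, (if i ∈ blk j then τ i else 0) • vecMulVec (p i) (q i)
          = ∑ i ∈ blk j, τ i • vecMulVec (p i) (q i) := by
        rw [Finset.sum_congr rfl fun i _ => hsplit i, Finset.sum_ite_mem, Finset.univ_inter]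
      exact e.symm
  have hnuc : ∀ j, nucNorm (Rb j) = ∑ i ∈ blk j, τ i := by
    intro j
    rw [(hrep j).nucNorm_eq]
    rw [Finset.sum_ite_mem, Finset.univ_inter]
  have hfrob : ∀ j, frobNorm (Rb j) ^ 2 = ∑ i ∈ blk j, τ i ^ 2 := by
    intro j
    rw [(hrep j).frobNorm_sq_eq]
    have : ∀ i, (if i ∈ blk j then τ i else 0) * (if i ∈ blk j then τ i else 0)
        = if i ∈ blk j then τ i ^ 2 else 0 := by
      intro i; by_cases h : i ∈ blk j <;> simp [h, sq]
    rw [Finset.sum_congr rfl fun i _ => this i]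
    rw [Finset.sum_ite_mem, Finset.univ_inter]
  have hcardblk : ∀ j, (blk j).card ≤ 3 * r := by
    intro j
    have : ∀ i ∈ blk j, i.val % (3 * r) ∈ Finset.range (3 * r) := by
      intro i _
      exact Finset.mem_range.2 (Nat.mod_lt _ h3r)
    have hinj : Set.InjOn (fun i : Fin n => i.val % (3 * r)) (blk j) := by
      intro i1 h1 i2 h2 he
      have e1 : i1.val / (3 * r) = j := (Finset.mem_filter.1 h1).2
      have e2 : i2.val / (3 * r) = j := (Finset.mem_filter.1 h2).2
      have d1 := Nat.div_add_mod i1.val (3 * r)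
      have d2 := Nat.div_add_mod i2.val (3 * r)
      rw [e1] at d1
      rw [e2] at d2
      simp only at he
      exact Fin.ext (by rw [← d1, ← d2, he])
    simpa using Finset.card_le_card_of_injOn _ this hinj
  refine ⟨Rb, ?_, ?_, ?_, ?_, ?_⟩
  · -- cover
    rw [hc.hA]
    exact (Finset.sum_fiberwise_of_maps_to (g := fun i : Fin n => i.val / (3 * r))
      (t := Finset.range n)
      (fun i _ => Finset.mem_range.2 (lt_of_le_of_lt (Nat.div_le_self _ _) i.isLt))
      (fun i => τ i • vecMulVec (p i) (q i))).symm
  · -- rank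
    intro j
    calc (Rb j).rank ≤ (Finset.univ.filter
        fun i => (if i ∈ blk j then τ i else 0) ≠ 0).card := (hrep j).rank_le
      _ ≤ (blk j).card := by
          refine Finset.card_le_card fun i hi => ?_
          have := (Finset.mem_filter.1 hi).2
          by_cases h : i ∈ blk j
          · exact h
          · rw [if_neg h] at this; exact absurd rfl this
      _ ≤ 3 * r := hcardblk j
  · -- total nuclear norm
    rw [Finset.sum_congr rfl fun j _ => hnuc j, hc.nucNorm_eq]
    exact Finset.sum_fiberwise_of_maps_to (fun i _ => Finset.mem_range.2
      (lt_of_le_of_lt (Nat.div_le_self _ _) i.isLt)) τ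
  · -- the tail bound
    intro j
    rcases Finset.eq_empty_or_nonempty (blk (j + 1)) with he | ⟨i0, hi0⟩
    · have : Rb (j + 1) = 0 := by show ∑ i ∈ blk (j+1), _ = _; rw [he]; simp
      rw [this, frobNorm_eq_zero_iff.2 rfl, zero_mul]
      rw [hnuc j]
      exact Finset.sum_nonneg fun i _ => hc.hσ i
    · -- `blk (j+1)` nonempty: every element of it is bounded by the average over `blk j`
      have hi0v : 3 * r * (j + 1) ≤ i0.val := by
        have e : i0.val / (3 * r) = j + 1 := (Finset.mem_filter.1 hi0).2
        have d := Nat.div_add_mod i0.val (3 * r)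
        rw [e] at d
        exact Nat.le.intro d
      -- the full block `blk j` has exactly 3r elements; build the injection
      have hτi0 : ∀ i ∈ blk (j + 1), (3 * r : ℝ) * τ i ≤ ∑ i' ∈ blk j, τ i' := by
        intro i hi
        have hiv : 3 * r * (j + 1) ≤ i.val := by
          have e : i.val / (3 * r) = j + 1 := (Finset.mem_filter.1 hi).2
          have d := Nat.div_add_mod i.val (3 * r)
          rw [e] at d
          exact Nat.le.intro d
        have hlt : ∀ s : Fin (3 * r), 3 * r * j + s.val < n := by
          intro s
          calc 3 * r * j + s.val < 3 * r * j + 3 * r := Nat.add_lt_add_left s.isLt _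
            _ = 3 * r * (j + 1) := by ring
            _ ≤ i0.val := hi0v
            _ < n := i0.isLt
        set φ : Fin (3 * r) → Fin n := fun s => ⟨3 * r * j + s.val, hlt s⟩ with hφ
        have hφblk : ∀ s, φ s ∈ blk j := by
          intro s
          refine Finset.mem_filter.2 ⟨Finset.mem_univ _, ?_⟩
          show (3 * r * j + s.val) / (3 * r) = j
          rw [Nat.add_comm, Nat.add_mul_div_left _ _ h3r, Nat.div_eq_of_lt s.isLt]
          omega
        have hφinj : Function.Injective φ := by
          intro s1 s2 he
          have : 3 * r * j + s1.val = 3 * r * j + s2.val := congrArg Fin.val he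
          exact Fin.ext (by omega)
        have hτφ : ∀ s, τ i ≤ τ (φ s) := by
          intro s
          refine hanti ?_
          show φ s ≤ i
          have h1 : (φ s).val < 3 * r * (j + 1) := by
            show 3 * r * j + s.val < 3 * r * (j + 1)
            calc 3 * r * j + s.val < 3 * r * j + 3 * r := Nat.add_lt_add_left s.isLt _
              _ = 3 * r * (j + 1) := by ring
          have h2 : (φ s).val < i.val := lt_of_lt_of_le h1 hiv
          exact le_of_lt h2
        calc (3 * r : ℝ) * τ i = ∑ _s : Fin (3 * r), τ i := by
              rw [Finset.sum_const, Finset.card_univ, Fintype.card_fin, nsmul_eq_mul]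
              push_cast
              ring
          _ ≤ ∑ s : Fin (3 * r), τ (φ s) := Finset.sum_le_sum fun s _ => hτφ s
          _ = ∑ i' ∈ Finset.univ.image φ, τ i' := by
              rw [Finset.sum_image fun s _ s' _ he => hφinj he]
          _ ≤ ∑ i' ∈ blk j, τ i' := by
              refine Finset.sum_le_sum_of_subset_of_nonneg ?_ fun i' hi' _ => hc.hσ i'
              intro x hx
              obtain ⟨s, -, rfl⟩ := Finset.mem_image.1 hx
              exact hφblk s
      -- conclude
      set S := ∑ i' ∈ blk j, τ i' with hS
      have hS0 : 0 ≤ S := Finset.sum_nonneg fun i _ => hc.hσ i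
      have hfb : frobNorm (Rb (j + 1)) ^ 2 * (3 * r) ≤ S ^ 2 := by
        rw [hfrob (j + 1)]
        have hterm : ∀ i ∈ blk (j + 1), τ i ^ 2 ≤ (S / (3 * r)) ^ 2 := by
          intro i hi
          have h1 : (3 * r : ℝ) * τ i ≤ S := hτi0 i hi
          have h2 : 0 ≤ τ i := hc.hσ i
          have h3 : (0:ℝ) < 3 * r := by positivity
          have h4 : τ i ≤ S / (3 * r) := by
            rw [le_div_iff₀ h3]; linarith
          exact pow_le_pow_left₀ h2 h4 2
        calc (∑ i ∈ blk (j + 1), τ i ^ 2) * (3 * r)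
            ≤ ((blk (j + 1)).card * (S / (3 * r)) ^ 2) * (3 * r) := by
              refine mul_le_mul_of_nonneg_right ?_ (by positivity)
              calc ∑ i ∈ blk (j + 1), τ i ^ 2 ≤ ∑ _i ∈ blk (j + 1), (S / (3 * r)) ^ 2 :=
                  Finset.sum_le_sum hterm
                _ = (blk (j + 1)).card * (S / (3 * r)) ^ 2 := by
                    rw [Finset.sum_const, nsmul_eq_mul]
          _ ≤ ((3 * r : ℝ) * (S / (3 * r)) ^ 2) * (3 * r) := by
              refine mul_le_mul_of_nonneg_right (mul_le_mul_of_nonneg_right ?_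
                (by positivity)) (by positivity)
              exact_mod_cast Nat.cast_le.2 (hcardblk (j + 1))
          _ = S ^ 2 := by
              have hne : (3 * (r:ℝ)) ≠ 0 := by positivity
              field_simp
      have hfb2 : (frobNorm (Rb (j + 1)) * Real.sqrt (3 * r)) ^ 2 ≤ S ^ 2 := by
        rw [mul_pow, Real.sq_sqrt (by positivity : (0:ℝ) ≤ 3 * r)]
        exact hfb
      have h5 : 0 ≤ frobNorm (Rb (j + 1)) * Real.sqrt (3 * r) :=
        mul_nonneg (frobNorm_nonneg _) (Real.sqrt_nonneg _)
      rw [hnuc j, ← hS]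
      calc frobNorm (Rb (j + 1)) * Real.sqrt (3 * r)
          = Real.sqrt ((frobNorm (Rb (j + 1)) * Real.sqrt (3 * r)) ^ 2) :=
            (Real.sqrt_sq h5).symm
        _ ≤ Real.sqrt (S ^ 2) := Real.sqrt_le_sqrt hfb2
        _ = S := Real.sqrt_sq hS0
  · -- orthogonality transfer
    intro j M hM
    rw [hRb, finner_comm, finner_sum_left]
    refine Finset.sum_eq_zero fun i _ => ?_
    rw [finner_smul_left]
    by_cases h : τ i = 0
    · rw [h, zero_mul]
    · rw [finner_comm, hM i h, mul_zero]

lemma nucNorm_zero : nucNorm (0 : Matrix (Fin m) (Fin n) ℝ) = 0 := by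
  have h : IsRep (0 : Matrix (Fin m) (Fin n) ℝ) (fun _ : Fin 0 => 0) (fun _ => 0) (fun _ => 0) :=
    ⟨fun i => le_refl 0, fun i => i.elim0, fun i => i.elim0, by simp⟩
  rw [h.nucNorm_eq]
  simp

end RFP

open RFP

set_option maxHeartbeats 1000000

/-- If the restricted isometry property holds at rank 5r with constant δ < 1/10, then X₀
is the unique nuclear norm minimizer subject to 𝒜(X) = b: any feasible X with nuclear
norm at most that of X₀ equals X₀. -/
theorem nucNorm_min_recovers_of_rip (m n p r : ℕ) (hr : 1 ≤ r)
    (𝒜 : Matrix (Fin m) (Fin n) ℝ →ₗ[ℝ] EuclideanSpace ℝ (Fin p))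
    (X₀ : Matrix (Fin m) (Fin n) ℝ) (hX₀ : X₀.rank ≤ r)
    (b : EuclideanSpace ℝ (Fin p)) (hb : 𝒜 X₀ = b)
    (δ : ℝ) (hδ0 : 0 ≤ δ) (hδ1 : δ < 1 / 10)
    (hRIP : ∀ X : Matrix (Fin m) (Fin n) ℝ, X.rank ≤ 5 * r →
      (1 - δ) * frobNorm X ≤ ‖𝒜 X‖ ∧ ‖𝒜 X‖ ≤ (1 + δ) * frobNorm X) :
    ∀ X : Matrix (Fin m) (Fin n) ℝ, 𝒜 X = b → nucNorm X ≤ nucNorm X₀ → X = X₀ := by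
  classical
  intro X hAX hnuc
  rcases Nat.eq_zero_or_pos n with hn | hn
  · subst hn; ext i j; exact j.elim0
  set R := X - X₀ with hRdef
  have hAR : 𝒜 R = 0 := by rw [hRdef, map_sub, hAX, hb, sub_self]
  obtain ⟨R0, Rc, τ, pp, qq, hsum, hc, hanti, hrank0, hadd, hforth⟩ := RFP.decomp X₀ R
  obtain ⟨Rb, hcover, hrankb, hnucsum, htail, horth⟩ := RFP.blocks r hr hc hanti
  have hsqrt3r : 0 < Real.sqrt (3 * r) := Real.sqrt_pos.2 (by positivity)
  -- Step A: nucNorm Rc ≤ nucNorm R0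
  have hXeq : X₀ + Rc = X + -R0 := by
    have h' : X - X₀ = R0 + Rc := hsum
    have e : Rc = X - X₀ - R0 := by rw [h']; abel
    rw [e]; abel
  have hstepA : nucNorm Rc ≤ nucNorm R0 := by
    have h2 : nucNorm (X + -R0) ≤ nucNorm X + nucNorm (-R0) := nucNorm_triangle _ _
    rw [← hXeq, hadd, nucNorm_neg] at h2
    linarith [hnuc]
  -- the head matrix B
  set B := R0 + Rb 0 with hBdef
  have hf0 : finner R0 (Rb 0) = 0 := horth 0 R0 hforth
  have hrankB : B.rank ≤ 5 * r := by
    calc B.rank ≤ R0.rank + (Rb 0).rank := rank_add_le _ _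
      _ ≤ 2 * r + 3 * r := add_le_add (le_trans hrank0 (by omega)) (hrankb 0)
      _ = 5 * r := by ring
  have hfinnerB : finner B B = finner R0 R0 + finner (Rb 0) (Rb 0) := by
    rw [hBdef, finner_add_left, finner_comm R0 (R0 + Rb 0), finner_add_left,
      finner_comm (Rb 0) (R0 + Rb 0), finner_add_left]
    rw [finner_comm (Rb 0) R0, finner_comm R0 R0]
    linarith [hf0]
  have hfrobB : frobNorm R0 ≤ frobNorm B := by
    rw [frobNorm_eq_sqrt_finner, frobNorm_eq_sqrt_finner]
    refine Real.sqrt_le_sqrt ?_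
    rw [hfinnerB]
    linarith [finner_self_nonneg (Rb 0)]
  -- the tail bound
  set K := (Finset.range n).erase 0 with hKdef
  have htail_sum : ∑ j ∈ K, frobNorm (Rb j) ≤ nucNorm Rc / Real.sqrt (3 * r) := by
    have hstep : ∀ j ∈ K, frobNorm (Rb j) ≤ nucNorm (Rb (j - 1)) / Real.sqrt (3 * r) := by
      intro j hj
      have hj0 : j ≠ 0 := (Finset.mem_erase.1 hj).1
      have hje : j - 1 + 1 = j := by omega
      have ht := htail (j - 1)
      rw [hje] at ht
      rw [le_div_iff₀ hsqrt3r]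
      exact ht
    calc ∑ j ∈ K, frobNorm (Rb j) ≤ ∑ j ∈ K, nucNorm (Rb (j - 1)) / Real.sqrt (3 * r) :=
        Finset.sum_le_sum hstep
      _ = (∑ j ∈ K, nucNorm (Rb (j - 1))) / Real.sqrt (3 * r) := by rw [Finset.sum_div]
      _ ≤ (∑ k ∈ Finset.range n, nucNorm (Rb k)) / Real.sqrt (3 * r) := by
          have hinj : Set.InjOn (fun j => j - 1) K := by
            intro j1 h1 j2 h2 he
            have e1 : j1 ≠ 0 := (Finset.mem_erase.1 h1).1
            have e2 : j2 ≠ 0 := (Finset.mem_erase.1 h2).1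
            simp only at he
            omega
          have himage : ∑ j ∈ K, nucNorm (Rb (j - 1))
              = ∑ k ∈ K.image (fun j => j - 1), nucNorm (Rb k) := by
            rw [Finset.sum_image (fun x hx y hy he => hinj hx hy he)]
          rw [himage]
          have hsub : K.image (fun j => j - 1) ⊆ Finset.range n := by
            intro k hk
            obtain ⟨j, hj, rfl⟩ := Finset.mem_image.1 hk
            have : j < n := Finset.mem_range.1 (Finset.mem_erase.1 hj).2
            exact Finset.mem_range.2 (by omega)
          have hle : ∑ k ∈ K.image (fun j => j - 1), nucNorm (Rb k)
              ≤ ∑ k ∈ Finset.range n, nucNorm (Rb k) :=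
            Finset.sum_le_sum_of_subset_of_nonneg hsub (fun k _ _ => nucNorm_nonneg _)
          exact (div_le_div_iff_of_pos_right hsqrt3r).2 hle
      _ = nucNorm Rc / Real.sqrt (3 * r) := by rw [hnucsum]
  -- splitting R into head and tail
  have hsplit : R = B + ∑ j ∈ K, Rb j := by
    have h0mem : (0 : ℕ) ∈ Finset.range n := Finset.mem_range.2 hn
    rw [hsum, hcover, ← Finset.add_sum_erase _ Rb h0mem, hBdef]
    abel
  -- upper bound on ‖𝒜 B‖
  have hABnorm : ‖𝒜 B‖ ≤ (1 + δ) * (Real.sqrt (2 * r) * frobNorm B / Real.sqrt (3 * r)) := by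
    have h0 : 𝒜 B + ∑ j ∈ K, 𝒜 (Rb j) = 0 := by
      have hz : 𝒜 (B + ∑ j ∈ K, Rb j) = 0 := by rw [← hsplit]; exact hAR
      rw [map_add, map_sum] at hz
      exact hz
    have hBneg : 𝒜 B = -∑ j ∈ K, 𝒜 (Rb j) := eq_neg_of_add_eq_zero_left h0
    calc ‖𝒜 B‖ = ‖∑ j ∈ K, 𝒜 (Rb j)‖ := by rw [hBneg, norm_neg]
      _ ≤ ∑ j ∈ K, ‖𝒜 (Rb j)‖ := norm_sum_le _ _
      _ ≤ ∑ j ∈ K, (1 + δ) * frobNorm (Rb j) := Finset.sum_le_sum fun j _ =>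
          (hRIP (Rb j) (le_trans (hrankb j) (by omega))).2
      _ = (1 + δ) * ∑ j ∈ K, frobNorm (Rb j) := by rw [Finset.mul_sum]
      _ ≤ (1 + δ) * (nucNorm Rc / Real.sqrt (3 * r)) :=
          mul_le_mul_of_nonneg_left htail_sum (by linarith)
      _ ≤ (1 + δ) * (nucNorm R0 / Real.sqrt (3 * r)) := by
          refine mul_le_mul_of_nonneg_left ((div_le_div_iff_of_pos_right hsqrt3r).2 hstepA) (by linarith)
      _ ≤ (1 + δ) * (Real.sqrt (2 * r) * frobNorm B / Real.sqrt (3 * r)) := by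
          refine mul_le_mul_of_nonneg_left ((div_le_div_iff_of_pos_right hsqrt3r).2 ?_) (by linarith)
          calc nucNorm R0 ≤ Real.sqrt (R0.rank) * frobNorm R0 :=
              nucNorm_le_sqrt_rank_mul_frobNorm R0
            _ ≤ Real.sqrt (2 * r) * frobNorm R0 := by
                refine mul_le_mul_of_nonneg_right (Real.sqrt_le_sqrt ?_) (frobNorm_nonneg _)
                have h2r : R0.rank ≤ 2 * r := le_trans hrank0 (by omega)
                exact_mod_cast h2r
            _ ≤ Real.sqrt (2 * r) * frobNorm B :=
                mul_le_mul_of_nonneg_left hfrobB (Real.sqrt_nonneg _)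
  have hlower := (hRIP B hrankB).1
  -- conclude B = 0
  have hBzero : frobNorm B = 0 := by
    by_contra hne
    have hpos : 0 < frobNorm B := lt_of_le_of_ne (frobNorm_nonneg B) (Ne.symm hne)
    have hmain : (1 - δ) * frobNorm B
        ≤ ((1 + δ) * (Real.sqrt (2 * r) / Real.sqrt (3 * r))) * frobNorm B := by
      calc (1 - δ) * frobNorm B ≤ ‖𝒜 B‖ := hlower
        _ ≤ (1 + δ) * (Real.sqrt (2 * r) * frobNorm B / Real.sqrt (3 * r)) := hABnorm
        _ = ((1 + δ) * (Real.sqrt (2 * r) / Real.sqrt (3 * r))) * frobNorm B := by ring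
    have h1 : (1 - δ) ≤ (1 + δ) * (Real.sqrt (2 * r) / Real.sqrt (3 * r)) :=
      le_of_mul_le_mul_right hmain hpos
    have hr0 : (0 : ℝ) < (r : ℝ) := Nat.cast_pos.mpr (by omega)
    have hrpos : (0 : ℝ) < Real.sqrt r := Real.sqrt_pos.2 hr0
    have e2 : Real.sqrt (2 * (r : ℝ)) = Real.sqrt 2 * Real.sqrt r := Real.sqrt_mul (by norm_num) _
    have e3 : Real.sqrt (3 * (r : ℝ)) = Real.sqrt 3 * Real.sqrt r := Real.sqrt_mul (by norm_num) _
    have e4 : Real.sqrt (2 * (r : ℝ)) / Real.sqrt (3 * (r : ℝ)) = Real.sqrt 2 / Real.sqrt 3 := by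
      rw [e2, e3, mul_div_mul_right _ _ (ne_of_gt hrpos)]
    rw [e4] at h1
    have hs3 : (0 : ℝ) < Real.sqrt 3 := Real.sqrt_pos.2 (by norm_num)
    have h1' : (1 - δ) ≤ ((1 + δ) * Real.sqrt 2) / Real.sqrt 3 := by
      rw [mul_div_assoc]; exact h1
    have h2' : (1 - δ) * Real.sqrt 3 ≤ (1 + δ) * Real.sqrt 2 := (le_div_iff₀ hs3).1 h1'
    have hnn : 0 ≤ (1 - δ) * Real.sqrt 3 := mul_nonneg (by linarith) (le_of_lt hs3)
    have h3 : ((1 - δ) * Real.sqrt 3) * ((1 - δ) * Real.sqrt 3)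
        ≤ ((1 + δ) * Real.sqrt 2) * ((1 + δ) * Real.sqrt 2) := mul_self_le_mul_self hnn h2'
    have s2 : Real.sqrt 2 * Real.sqrt 2 = 2 := Real.mul_self_sqrt (by norm_num)
    have s3 : Real.sqrt 3 * Real.sqrt 3 = 3 := Real.mul_self_sqrt (by norm_num)
    have h4 : 3 * (1 - δ) ^ 2 ≤ 2 * (1 + δ) ^ 2 := by nlinarith [h3, s2, s3]
    nlinarith [h4]
  -- unwind everything
  have hR0zero : R0 = 0 := by
    have h1 : frobNorm R0 ≤ 0 := hBzero ▸ hfrobB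
    exact frobNorm_eq_zero_iff.1 (le_antisymm h1 (frobNorm_nonneg _))
  have hRczero : Rc = 0 := by
    have h := hstepA
    rw [hR0zero, nucNorm_zero] at h
    exact eq_zero_of_nucNorm_nonpos h
  have hRzero : R = 0 := by
    rw [hsum, hR0zero, hRczero, add_zero]
  have hXX : X - X₀ = 0 := by rw [← hRdef]; exact hRzero
  exact sub_eq_zero.1 hXX
end

section
/- Let 𝒜 : ℝ^{m×n} → ℝ^p be a linear map with adjoint 𝒜*, let b ∈ ℝ^p, and suppose L* ∈ ℝ^{m×r}, R* ∈ ℝ^{n×r}, y* ∈ ℝ^p satisfy: L* = 𝒜*(y*)·R*, R* = 𝒜*(y*)'·L*, 𝒜(L*·R*') = b, and the operator norm ‖𝒜*(y*)‖ ≤ 1. Then X* := L*·R*' minimizes the nuclear norm over the feasible set: for every X ∈ ℝ^{m×n} with 𝒜(X) = b, one has ‖X*‖_* ≤ ‖X‖_*; moreover ‖X*‖_* = (‖L*‖_F² + ‖R*‖_F²)/2 = b'y*. -/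
open Matrix

/-- The operator norm (largest singular value / induced 2-norm) of a real matrix. -/
noncomputable def opNorm {m n : Type*} [Fintype m] [Fintype n] [DecidableEq n]
    (X : Matrix m n ℝ) : ℝ :=
  ‖LinearMap.toContinuousLinearMap (Matrix.toEuclideanLin X)‖

open scoped MatrixOrder in
lemma nucNorm_eq_of_sq {m n : Type*} [Fintype m] [Fintype n] [DecidableEq n]
    (X : Matrix m n ℝ) (B : Matrix n n ℝ) (hB : B.PosSemidef) (h : B ^ 2 = Xᴴ * X) :
    nucNorm X = B.trace := by
  have hA := posSemidef_conjTranspose_mul_self X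
  have e1 : cfc Real.sqrt (Xᴴ * X) = (hA.1.eigenvectorUnitary : Matrix n n ℝ) *
      diagonal ((RCLike.ofReal : ℝ → ℝ) ∘ (√·) ∘ hA.1.eigenvalues) *
      (star hA.1.eigenvectorUnitary : Matrix n n ℝ) := by
    rw [IsHermitian.cfc_eq hA.1, IsHermitian.cfc]; rfl
  rw [nucNorm, ← e1, ← cfcₙ_eq_cfc (hf := Real.continuous_sqrt.continuousOn) (hf0 := Real.sqrt_zero),
    ← CFC.sqrt_eq_real_sqrt _ hA.nonneg,
    CFC.sqrt_unique (by rw [← sq, h]) hB.nonneg]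

lemma sqrt_sum_sq_mulVec_le {m n : Type*} [Fintype m] [Fintype n] [DecidableEq n]
    (Y : Matrix m n ℝ) (u : n → ℝ) :
    Real.sqrt (∑ j, (Y *ᵥ u) j ^ 2) ≤ opNorm Y * Real.sqrt (∑ k, u k ^ 2) := by
  have h := (LinearMap.toContinuousLinearMap (toEuclideanLin Y)).le_opNorm
      ((WithLp.equiv 2 (n → ℝ)).symm u)
  simpa [EuclideanSpace.norm_eq, toEuclideanLin_apply, opNorm,
    Real.norm_eq_abs, sq_abs] using h

lemma nucNorm_eq_sum_sqrt {m n : Type*} [Fintype m] [Fintype n] [DecidableEq n]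
    (X : Matrix m n ℝ) :
    nucNorm X = ∑ i, Real.sqrt ((Matrix.posSemidef_conjTranspose_mul_self X).1.eigenvalues i) := by
  rw [nucNorm, Matrix.trace_mul_cycle,
    Unitary.coe_star_mul_self, one_mul, Matrix.trace_diagonal]
  simp [RCLike.ofReal_real_eq_id]

lemma trace_decomp {m n : Type*} [Fintype m] [Fintype n] [DecidableEq n]
    (X Y : Matrix m n ℝ) (U : Matrix n n ℝ) (hUUt : U * star U = 1) :
    (Xᵀ * Y).trace = ∑ i, (X *ᵥ (fun k => U k i)) ⬝ᵥ (Y *ᵥ (fun k => U k i)) := by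
  have h1 : (Xᵀ * Y).trace = ((star U * Xᵀ) * (Y * U)).trace := by
    calc (Xᵀ * Y).trace = ((Xᵀ * Y) * U * star U).trace := by
          rw [mul_assoc, hUUt, mul_one]
      _ = (star U * (Xᵀ * Y) * U).trace := trace_mul_cycle _ _ _
      _ = ((star U * Xᵀ) * (Y * U)).trace := by simp only [Matrix.mul_assoc]
  rw [h1, trace]
  refine Finset.sum_congr rfl fun i _ => ?_
  simp only [diag_apply, mul_apply, star_apply, transpose_apply, mulVec, dotProduct,
    star_trivial]
  refine Finset.sum_congr rfl fun j _ => ?_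
  congr 1
  exact Finset.sum_congr rfl fun k _ => mul_comm _ _

lemma trace_transpose_mul_le_nucNorm {m n : Type*} [Fintype m] [Fintype n] [DecidableEq n]
    (X Y : Matrix m n ℝ) (hY : opNorm Y ≤ 1) :
    (Xᵀ * Y).trace ≤ nucNorm X := by
  have hA := Matrix.posSemidef_conjTranspose_mul_self X
  set hH := hA.1 with hHdef
  set U : Matrix n n ℝ := (hH.eigenvectorUnitary : Matrix n n ℝ) with hUdef
  have hUUt : U * star U = 1 := Unitary.coe_mul_star_self _
  have hUU : star U * U = 1 := Unitary.coe_star_mul_self _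
  set u : n → n → ℝ := fun i k => U k i with hudef
  have hu_basis : ∀ i, u i = ⇑(hH.eigenvectorBasis i) := fun i =>
    funext fun k => hH.eigenvectorUnitary_apply k i
  have hu_sum : ∀ i, ∑ k, u i k ^ 2 = 1 := by
    intro i
    have h := congrFun (congrFun hUU i) i
    simp only [mul_apply, star_apply, star_trivial, one_apply_eq] at h
    simpa [sq] using h
  have hXu : ∀ i, ∑ j, (X *ᵥ u i) j ^ 2 = hH.eigenvalues i := by
    intro i
    have hAv : (Xᴴ * X) *ᵥ u i = hH.eigenvalues i • u i := by
      rw [hu_basis i]; exact hH.mulVec_eigenvectorBasis i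
    have h1 : ∑ j, (X *ᵥ u i) j ^ 2 = (X *ᵥ u i) ⬝ᵥ (X *ᵥ u i) := by
      simp [dotProduct, sq]
    have h2 : (X *ᵥ u i) ⬝ᵥ (X *ᵥ u i) = u i ⬝ᵥ ((Xᴴ * X) *ᵥ u i) := by
      rw [conjTranspose_eq_transpose_of_trivial, ← mulVec_mulVec]
      conv_rhs => rw [dotProduct_mulVec, vecMul_transpose]
    rw [h1, h2, hAv, dotProduct_smul]
    have : u i ⬝ᵥ u i = 1 := by simpa [dotProduct, sq] using hu_sum i
    simp [this]
  rw [trace_decomp X Y U hUUt, nucNorm_eq_sum_sqrt]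
  refine Finset.sum_le_sum fun i _ => ?_
  have hYu : Real.sqrt (∑ j, (Y *ᵥ u i) j ^ 2) ≤ 1 := by
    refine (sqrt_sum_sq_mulVec_le Y (u i)).trans ?_
    rw [hu_sum i, Real.sqrt_one, mul_one]; exact hY
  have cs := Finset.sum_mul_sq_le_sq_mul_sq Finset.univ
    (fun j => (X *ᵥ u i) j) (fun j => (Y *ᵥ u i) j)
  calc (X *ᵥ u i) ⬝ᵥ (Y *ᵥ u i)
      ≤ Real.sqrt (((X *ᵥ u i) ⬝ᵥ (Y *ᵥ u i)) ^ 2) := by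
        rw [Real.sqrt_sq_eq_abs]; exact le_abs_self _
    _ ≤ Real.sqrt ((∑ j, (X *ᵥ u i) j ^ 2) * ∑ j, (Y *ᵥ u i) j ^ 2) :=
        Real.sqrt_le_sqrt cs
    _ = Real.sqrt (∑ j, (X *ᵥ u i) j ^ 2) * Real.sqrt (∑ j, (Y *ᵥ u i) j ^ 2) :=
        Real.sqrt_mul (by positivity) _
    _ = Real.sqrt (hH.eigenvalues i) * Real.sqrt (∑ j, (Y *ᵥ u i) j ^ 2) := by
        rw [hXu i]
    _ ≤ Real.sqrt (hH.eigenvalues i) * 1 :=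
        mul_le_mul_of_nonneg_left hYu (Real.sqrt_nonneg _)
    _ = Real.sqrt (hH.eigenvalues i) := mul_one _

lemma frobNorm_sq_eq {m n : Type*} [Fintype m] [Fintype n] (M : Matrix m n ℝ) :
    frobNorm M ^ 2 = (M * Mᵀ).trace := by
  rw [frobNorm, Real.sq_sqrt (by positivity)]
  simp [trace, diag, mul_apply, sq]

/-- If (L*, R*, y*) is a stationary feasible point of the method of multipliers and the
dual certificate 𝒜*(y*) has operator norm at most 1, then X* = L* R*ᵀ minimizes the
nuclear norm over {X : 𝒜(X) = b}, with ‖X*‖₊ = (‖L*‖_F² + ‖R*‖_F²)/2 = bᵀy*. -/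
theorem stationary_point_optimal (m n p r : ℕ)
    (𝒜 : Matrix (Fin m) (Fin n) ℝ →ₗ[ℝ] (Fin p → ℝ))
    (𝒜s : (Fin p → ℝ) →ₗ[ℝ] Matrix (Fin m) (Fin n) ℝ)
    (hadj : ∀ (X : Matrix (Fin m) (Fin n) ℝ) (y : Fin p → ℝ),
      𝒜 X ⬝ᵥ y = (Xᵀ * 𝒜s y).trace)
    (b : Fin p → ℝ)
    (Lstar : Matrix (Fin m) (Fin r) ℝ) (Rstar : Matrix (Fin n) (Fin r) ℝ)
    (ystar : Fin p → ℝ)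
    (hL : Lstar = 𝒜s ystar * Rstar) (hR : Rstar = (𝒜s ystar)ᵀ * Lstar)
    (hfeas : 𝒜 (Lstar * Rstarᵀ) = b)
    (hdual : opNorm (𝒜s ystar) ≤ 1) :
    (∀ X : Matrix (Fin m) (Fin n) ℝ, 𝒜 X = b →
      nucNorm (Lstar * Rstarᵀ) ≤ nucNorm X) ∧
    nucNorm (Lstar * Rstarᵀ) = (frobNorm Lstar ^ 2 + frobNorm Rstar ^ 2) / 2 ∧
    nucNorm (Lstar * Rstarᵀ) = b ⬝ᵥ ystar := by
  have hLtY : Lstarᵀ * 𝒜s ystar = Rstarᵀ := by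
    conv_rhs => rw [hR]
    rw [transpose_mul, transpose_transpose]
  have hLL : Lstarᵀ * Lstar = Rstarᵀ * Rstar := by
    nth_rewrite 2 [hL]
    rw [← Matrix.mul_assoc, hLtY]
  have hRRt_psd : (Rstar * Rstarᵀ).PosSemidef := by
    have h := posSemidef_self_mul_conjTranspose Rstar
    rwa [conjTranspose_eq_transpose_of_trivial] at h
  have hsq : (Rstar * Rstarᵀ) ^ 2 = (Lstar * Rstarᵀ)ᴴ * (Lstar * Rstarᵀ) := by
    rw [conjTranspose_eq_transpose_of_trivial, transpose_mul, transpose_transpose, sq]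
    simp only [Matrix.mul_assoc]
    congr 1
    rw [← Matrix.mul_assoc, ← Matrix.mul_assoc, hLL]
  have hnuc : nucNorm (Lstar * Rstarᵀ) = (Rstar * Rstarᵀ).trace :=
    nucNorm_eq_of_sq _ _ hRRt_psd hsq
  have hfrobR : frobNorm Rstar ^ 2 = (Rstar * Rstarᵀ).trace := frobNorm_sq_eq Rstar
  have hfrobL : frobNorm Lstar ^ 2 = (Rstar * Rstarᵀ).trace := by
    rw [frobNorm_sq_eq, trace_mul_comm, hLL, trace_mul_comm]
  have hbY : b ⬝ᵥ ystar = (Rstar * Rstarᵀ).trace := by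
    rw [← hfeas, hadj, transpose_mul, transpose_transpose, Matrix.mul_assoc, hLtY]
  refine ⟨fun X hX => ?_, by rw [hnuc, hfrobL, hfrobR]; ring, by rw [hnuc, hbY]⟩
  have h1 : nucNorm (Lstar * Rstarᵀ) = (Xᵀ * 𝒜s ystar).trace := by
    rw [hnuc, ← hbY, ← hX, hadj]
  rw [h1]
  exact trace_transpose_mul_le_nucNorm X (𝒜s ystar) hdual
end
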